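/- Let Γ = L₃ ⋊ ℤ/2ℤ where ℤ/2ℤ acts on the integral Heisenberg group L₃ by the automorphism H_{x,y,z} ↦ H_{−x,−y,z}. Then the abelianization Γ/[Γ,Γ] is isomorphic to (ℤ/2ℤ)³. -/

import Mathlib

/-- For `Γ = L₃ ⋊ ℤ/2ℤ` where `ℤ/2ℤ` acts on the integral
Heisenberg group by `H_{x,y,z} ↦ H_{−x,−y,z}` (modelled as a group `G` with
underlying set `ℤ³ × ℤ/2ℤ` and the semidirect product multiplication), the
abelianization of `Γ` is isomorphic to `(ℤ/2ℤ)³`. -/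
theorem stmt12 (G : Type*) [Group G] (f : (ℤ × ℤ × ℤ) × ZMod 2 ≃ G)
    (hmul : ∀ (x y z x' y' z' : ℤ) (ε ε' : ZMod 2),
      f ((x, y, z), ε) * f ((x', y', z'), ε') =
        f ((x + (if ε = 0 then (1 : ℤ) else -1) * x',
            y + (if ε = 0 then (1 : ℤ) else -1) * y',
            z + z' + x * ((if ε = 0 then (1 : ℤ) else -1) * y')), ε + ε')) :
    Nonempty (Abelianization G ≃* Multiplicative (ZMod 2 × ZMod 2 × ZMod 2)) := by
  classical
  have hsign : ∀ ε : ZMod 2, ((if ε = 0 then (1 : ℤ) else -1 : ℤ) : ZMod 2) = 1 := by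
    intro ε; split <;> decide
  have heps : ∀ ε : ZMod 2, ε + ε = 0 := by decide
  have hval : ∀ a : ZMod 2, ((a.val : ℤ) : ZMod 2) = a := by decide
  -- identity element
  have h1 : f ((0, 0, 0), (0 : ZMod 2)) = 1 := by
    have h := hmul 0 0 0 0 0 0 0 0
    simp at h
    exact h
  have h1' : f (0 : (ℤ × ℤ × ℤ) × ZMod 2) = 1 := h1
  have hone : (1 : ZMod 2) ≠ 0 := by decide
  have hneg : (-1 : ZMod 2) = 1 := by decide
  -- basic products
  have hA : ∀ x x' : ℤ, f ((x, 0, 0), (0 : ZMod 2)) * f ((x', 0, 0), 0) =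
      f ((x + x', 0, 0), 0) := by
    intro x x'; have h := hmul x 0 0 x' 0 0 0 0; simpa using h
  have hB : ∀ y y' : ℤ, f ((0, y, 0), (0 : ZMod 2)) * f ((0, y', 0), 0) =
      f ((0, y + y', 0), 0) := by
    intro y y'; have h := hmul 0 y 0 0 y' 0 0 0; simpa using h
  -- decomposition
  have hdec : ∀ (x y z : ℤ) (ε : ZMod 2), f ((x, y, z), ε) =
      f ((x, 0, 0), 0) * f ((0, y, 0), 0) * f ((0, 0, z - x * y), 0) *
        f ((0, 0, 0), ε) := by
    intro x y z ε
    rw [hmul, hmul, hmul]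
    norm_num
  set o : G →* Abelianization G := Abelianization.of with ho
  -- central entries die in the abelianization
  have hC1 : ∀ z : ℤ, o (f ((0, 0, z), (0 : ZMod 2))) = 1 := by
    intro z
    have key : f ((z, 0, 0), (0 : ZMod 2)) * f ((0, 1, 0), 0) =
        f ((0, 0, z), 0) * (f ((0, 1, 0), 0) * f ((z, 0, 0), 0)) := by
      rw [hmul, hmul, hmul]; norm_num
    have h2 := congrArg o key
    simp only [map_mul] at h2
    rw [mul_comm (o (f ((0, 1, 0), 0))) (o (f ((z, 0, 0), 0))), ← mul_assoc] at h2
    have h3 : o (f ((z, 0, 0), (0 : ZMod 2))) * o (f ((0, 1, 0), 0)) =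
        o (f ((0, 0, z), 0)) * (o (f ((z, 0, 0), 0)) * o (f ((0, 1, 0), 0))) := by
      rw [← mul_assoc]; exact h2
    exact right_eq_mul.mp h3
  -- squares of T
  have hT2 : ∀ ε : ZMod 2, f ((0, 0, 0), ε) * f ((0, 0, 0), ε) = 1 := by
    intro ε
    have h := hmul 0 0 0 0 0 0 ε ε
    simp [heps ε] at h
    simpa [h1', h1] using h
  -- of (A x) squares to 1
  have hAsq : ∀ x : ℤ, o (f ((x, 0, 0), (0 : ZMod 2))) * o (f ((x, 0, 0), 0)) = 1 := by
    intro x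
    have hconj : f ((0, 0, 0), (1 : ZMod 2)) * f ((x, 0, 0), 0) * f ((0, 0, 0), 1) =
        f ((-x, 0, 0), 0) := by
      rw [hmul, hmul]
      simp [hone, heps]
    have h2 := congrArg o hconj
    simp only [map_mul] at h2
    have h3 : o (f ((-x, 0, 0), (0 : ZMod 2))) = o (f ((x, 0, 0), 0)) := by
      rw [← h2]
      rw [mul_comm (o (f ((0, 0, 0), 1))) (o (f ((x, 0, 0), 0))), mul_assoc,
        ← map_mul, hT2, map_one, mul_one]
    calc o (f ((x, 0, 0), (0 : ZMod 2))) * o (f ((x, 0, 0), 0))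
        = o (f ((x, 0, 0), 0)) * o (f ((-x, 0, 0), 0)) := by rw [h3]
      _ = o (f ((x, 0, 0), 0) * f ((-x, 0, 0), 0)) := by rw [map_mul]
      _ = 1 := by
          have hz : x + -x = 0 := by ring
          rw [hA, hz, h1, map_one]
  have hBsq : ∀ y : ℤ, o (f ((0, y, 0), (0 : ZMod 2))) * o (f ((0, y, 0), 0)) = 1 := by
    intro y
    have hconj : f ((0, 0, 0), (1 : ZMod 2)) * f ((0, y, 0), 0) * f ((0, 0, 0), 1) =
        f ((0, -y, 0), 0) := by
      rw [hmul, hmul]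
      simp [hone, heps]
    have h2 := congrArg o hconj
    simp only [map_mul] at h2
    have h3 : o (f ((0, -y, 0), (0 : ZMod 2))) = o (f ((0, y, 0), 0)) := by
      rw [← h2]
      rw [mul_comm (o (f ((0, 0, 0), 1))) (o (f ((0, y, 0), 0))), mul_assoc,
        ← map_mul, hT2, map_one, mul_one]
    calc o (f ((0, y, 0), (0 : ZMod 2))) * o (f ((0, y, 0), 0))
        = o (f ((0, y, 0), 0)) * o (f ((0, -y, 0), 0)) := by rw [h3]
      _ = o (f ((0, y, 0), 0) * f ((0, -y, 0), 0)) := by rw [map_mul]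
      _ = 1 := by
          have hz : y + -y = 0 := by ring
          rw [hB, hz, h1, map_one]
  -- reduce first coordinates mod 2
  have hAmod : ∀ x x' : ℤ, (2 : ℤ) ∣ x - x' →
      o (f ((x, 0, 0), (0 : ZMod 2))) = o (f ((x', 0, 0), 0)) := by
    intro x x' ⟨k, hk⟩
    have hx : x = x' + (k + k) := by linarith
    have : f ((x, 0, 0), (0 : ZMod 2)) =
        f ((x', 0, 0), 0) * (f ((k, 0, 0), 0) * f ((k, 0, 0), 0)) := by
      rw [hA, hA, hx]
    rw [this, map_mul, map_mul, hAsq, mul_one]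
  have hBmod : ∀ y y' : ℤ, (2 : ℤ) ∣ y - y' →
      o (f ((0, y, 0), (0 : ZMod 2))) = o (f ((0, y', 0), 0)) := by
    intro y y' ⟨k, hk⟩
    have hy : y = y' + (k + k) := by linarith
    have : f ((0, y, 0), (0 : ZMod 2)) =
        f ((0, y', 0), 0) * (f ((0, k, 0), 0) * f ((0, k, 0), 0)) := by
      rw [hB, hB, hy]
    rw [this, map_mul, map_mul, hBsq, mul_one]
  -- the projection homomorphism
  let φ : G →* Multiplicative (ZMod 2 × ZMod 2 × ZMod 2) :=
    MonoidHom.mk' (fun g => Multiplicative.ofAdd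
      ((((f.symm g).1.1 : ℤ) : ZMod 2), (((f.symm g).1.2.1 : ℤ) : ZMod 2), (f.symm g).2))
      (by
        intro g h
        obtain ⟨⟨⟨x, y, z⟩, ε⟩, rfl⟩ := f.surjective g
        obtain ⟨⟨⟨x', y', z'⟩, ε'⟩, rfl⟩ := f.surjective h
        rw [hmul]
        simp only [Equiv.symm_apply_apply]
        rw [← ofAdd_add]
        congr 1
        simp only [Prod.mk_add_mk, Prod.mk.injEq]
        refine ⟨?_, ?_, trivial⟩
        · push_cast [hneg]
          simp only [ite_self]
          ring
        · push_cast [hneg]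
          simp only [ite_self]
          ring)
  have hφ : ∀ (x y z : ℤ) (ε : ZMod 2), φ (f ((x, y, z), ε)) =
      Multiplicative.ofAdd (((x : ZMod 2), (y : ZMod 2), ε)) := by
    intro x y z ε
    show Multiplicative.ofAdd
        ((((f.symm (f ((x, y, z), ε))).1.1 : ℤ) : ZMod 2),
         (((f.symm (f ((x, y, z), ε))).1.2.1 : ℤ) : ZMod 2),
         (f.symm (f ((x, y, z), ε))).2) = _
    rw [Equiv.symm_apply_apply]
  let Φ := Abelianization.lift φ
  -- the section
  let ψ : Multiplicative (ZMod 2 × ZMod 2 × ZMod 2) → Abelianization G :=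
    fun a => o (f ((((a.toAdd.1.val : ℤ)), ((a.toAdd.2.1.val : ℤ)), 0), a.toAdd.2.2))
  -- normal form in the abelianization
  have hnf : ∀ (x y z : ℤ) (ε : ZMod 2), o (f ((x, y, z), ε)) =
      o (f ((x, 0, 0), 0)) * o (f ((0, y, 0), 0)) * o (f ((0, 0, 0), ε)) := by
    intro x y z ε
    rw [hdec x y z ε]
    simp only [map_mul]
    rw [hC1, mul_one]
  refine ⟨{ toFun := Φ, invFun := ψ,
            left_inv := ?_, right_inv := ?_, map_mul' := map_mul Φ }⟩
  · intro g
    refine QuotientGroup.induction_on g ?_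
    intro g
    obtain ⟨⟨⟨x, y, z⟩, ε⟩, rfl⟩ := f.surjective g
    show ψ (Φ (o (f ((x, y, z), ε)))) = o (f ((x, y, z), ε))
    rw [show Φ (o (f ((x, y, z), ε))) = φ (f ((x, y, z), ε)) from
      Abelianization.lift_apply_of φ _, hφ]
    show o (f (((((x : ZMod 2)).val : ℤ), (((y : ZMod 2)).val : ℤ), 0), ε)) = _
    rw [hnf, hnf x y z ε]
    have hdx : (2 : ℤ) ∣ (((x : ZMod 2)).val : ℤ) - x := by
      have : (((((x : ZMod 2)).val : ℤ) - x : ℤ) : ZMod 2) = 0 := by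
        push_cast [hval]
        simp
      exact (ZMod.intCast_zmod_eq_zero_iff_dvd _ 2).mp this
    have hdy : (2 : ℤ) ∣ (((y : ZMod 2)).val : ℤ) - y := by
      have : (((((y : ZMod 2)).val : ℤ) - y : ℤ) : ZMod 2) = 0 := by
        push_cast [hval]
        simp
      exact (ZMod.intCast_zmod_eq_zero_iff_dvd _ 2).mp this
    rw [hAmod _ _ hdx, hBmod _ _ hdy]
  · intro a
    show Φ (o (f (((a.toAdd.1.val : ℤ), (a.toAdd.2.1.val : ℤ), 0), a.toAdd.2.2))) = a
    rw [show Φ (o (f (((a.toAdd.1.val : ℤ), (a.toAdd.2.1.val : ℤ), 0), a.toAdd.2.2))) =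
      φ (f (((a.toAdd.1.val : ℤ), (a.toAdd.2.1.val : ℤ), 0), a.toAdd.2.2)) from
      Abelianization.lift_apply_of φ _, hφ]
    rw [hval, hval]
    rfl
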